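/- arXiv:1303.6649 — 7 statements merged into one kernel-verified Lean document; each statement's English description precedes it below -/
import Mathlib

section
/- Let H be a complex Hilbert space and let K be a bounded selfadjoint operator on H, and for t ∈ ℝ set V(t) = exp(i t K) (a strongly continuous one-parameter group of unitaries whose generator K has spectrum bounded below, since K is bounded). Let E₁, E₂ be effects on H such that (i) E₁ E₂ = 0, and (ii) there is ε > 0 such that for all t with |t| < ε one has E₁ (V(t) E₂ V(t)*) = (V(t) E₂ V(t)*) E₁. Then E₁ V(t) E₂ V(t)* = 0 for all t ∈ ℝ. -/
open ContinuousLinearMap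

section BorchersAux

variable {H : Type*} [NormedAddCommGroup H] [InnerProductSpace ℂ H] [CompleteSpace H]

local notation "⟪" x ", " y "⟫" => @inner ℂ _ _ x y

/-- closure of the range of an operator -/
noncomputable def rcl (A : H →L[ℂ] H) : Submodule ℂ H :=
  (LinearMap.range (A : H →ₗ[ℂ] H)).topologicalClosure

instance rcl_complete (A : H →L[ℂ] H) : CompleteSpace (rcl A) :=
  (Submodule.isClosed_topologicalClosure _).completeSpace_coe

/-- projection onto closure of range -/
noncomputable def rproj (A : H →L[ℂ] H) : H →L[ℂ] H :=
  (rcl A).subtypeL ∘L (rcl A).orthogonalProjectionOnto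

lemma apply_mem_rcl (A : H →L[ℂ] H) (x : H) : A x ∈ rcl A :=
  (LinearMap.range (A : H →ₗ[ℂ] H)).le_topologicalClosure ⟨x, rfl⟩

lemma apply_mem_closure_range (A : H →L[ℂ] H) (x : H) :
    A x ∈ closure ((LinearMap.range (A : H →ₗ[ℂ] H) : Submodule ℂ H) : Set H) := by
  exact subset_closure ⟨x, rfl⟩

lemma mem_rcl_iff (A : H →L[ℂ] H) (u : H) :
    u ∈ rcl A ↔ u ∈ closure ((LinearMap.range (A : H →ₗ[ℂ] H) : Submodule ℂ H) : Set H) := by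
  rw [rcl, ← Submodule.topologicalClosure_coe]; rfl

lemma rproj_fix (A : H →L[ℂ] H) {u : H} (hu : u ∈ rcl A) : rproj A u = u := by
  exact (rcl A).starProjection_eq_self_iff.mpr hu

lemma rproj_mem (A : H →L[ℂ] H) (x : H) : rproj A x ∈ rcl A := by
  simp only [rproj, coe_comp', Function.comp_apply, Submodule.coe_subtypeL',
    Submodule.coe_subtype]
  exact ((rcl A).orthogonalProjectionOnto x).2

lemma rproj_isSelfAdjoint (A : H →L[ℂ] H) : IsSelfAdjoint (rproj A) :=
  isSelfAdjoint_starProjection (rcl A)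

lemma rproj_norm_apply_le (A : H →L[ℂ] H) (x : H) : ‖rproj A x‖ ≤ ‖x‖ := by
  have h1 : ‖rproj A x‖ = ‖(rcl A).orthogonalProjectionOnto x‖ := rfl
  rw [h1]
  calc ‖(rcl A).orthogonalProjectionOnto x‖ ≤ ‖(rcl A).orthogonalProjectionOnto‖ * ‖x‖ :=
        ((rcl A).orthogonalProjectionOnto).le_opNorm x
    _ ≤ 1 * ‖x‖ := by
        exact mul_le_mul_of_nonneg_right (Submodule.orthogonalProjectionOnto_norm_le _) (norm_nonneg x)
    _ = ‖x‖ := one_mul _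

lemma rproj_mul_self (A : H →L[ℂ] H) : rproj A * A = A := by
  ext x
  exact rproj_fix A (apply_mem_rcl A x)

lemma self_mul_rproj {A : H →L[ℂ] H} (hA : IsSelfAdjoint A) : A * rproj A = A := by
  have h := congrArg star (rproj_mul_self A)
  rwa [star_mul, (rproj_isSelfAdjoint A).star_eq, hA.star_eq] at h

lemma rproj_orth {A B : H →L[ℂ] H} (hA : IsSelfAdjoint A) (h : A * B = 0) :
    rproj A * rproj B = 0 := by
  have hsub : rcl B ≤ (rcl A)ᗮ := by
    have h1 : (LinearMap.range (B : H →ₗ[ℂ] H) : Submodule ℂ H) ≤ (LinearMap.range (A : H →ₗ[ℂ] H))ᗮ := by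
      rintro - ⟨y, rfl⟩
      rw [Submodule.mem_orthogonal]
      rintro - ⟨x, rfl⟩
      have : ⟪A x, B y⟫ = ⟪x, (ContinuousLinearMap.adjoint A) (B y)⟫ :=
        (ContinuousLinearMap.adjoint_inner_right _ _ _).symm
      rw [show ⟪(A : H →ₗ[ℂ] H) x, (B : H →ₗ[ℂ] H) y⟫ = ⟪A x, B y⟫ from rfl, this, hA.adjoint_eq]
      have : A (B y) = (A * B) y := rfl
      rw [this, h]
      simp
    have h2 : (LinearMap.range (A : H →ₗ[ℂ] H))ᗮ ≤ (rcl A)ᗮ := by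
      intro u hu
      rw [Submodule.mem_orthogonal] at hu ⊢
      intro v hv
      rw [mem_rcl_iff] at hv
      have hcl : IsClosed {w : H | ⟪w, u⟫ = 0} :=
        isClosed_eq (by continuity) continuous_const
      exact hcl.closure_subset_iff.mpr (fun w hw => hu w hw) hv
    exact le_trans (Submodule.topologicalClosure_minimal _ h1
      (Submodule.isClosed_orthogonal _)) h2
  ext x
  have hx : rproj B x ∈ (rcl A)ᗮ := hsub (rproj_mem B x)
  have : (rcl A).orthogonalProjectionOnto (rproj B x) = 0 :=
    Submodule.orthogonalProjectionOnto_apply_of_mem_orthogonal hx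
  simp only [ContinuousLinearMap.mul_apply, ContinuousLinearMap.zero_apply]
  show (rcl A).subtypeL ((rcl A).orthogonalProjectionOnto (rproj B x)) = 0
  rw [this]; simp

/-- a selfadjoint operator commuting with `A` commutes with `rproj A` -/
lemma rproj_comm {A X : H →L[ℂ] H} (hX : IsSelfAdjoint X) (h : X * A = A * X) :
    X * rproj A = rproj A * X := by
  have hinv : ∀ u ∈ rcl A, X u ∈ rcl A := by
    intro u hu
    rw [mem_rcl_iff] at hu ⊢
    refine map_mem_closure X.continuous hu ?_
    rintro - ⟨y, rfl⟩
    have : X (A y) = A (X y) := by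
      have := congrArg (fun T : H →L[ℂ] H => T y) h
      simpa using this
    exact this ▸ ⟨X y, rfl⟩
  have e1 : rproj A * (X * rproj A) = X * rproj A := by
    ext x
    exact rproj_fix A (hinv _ (rproj_mem A x))
  have e2 := congrArg star e1
  rw [star_mul, star_mul, (rproj_isSelfAdjoint A).star_eq, hX.star_eq] at e2
  -- star (P * (X * P)) = star (X*P) * star P = (P * X) * P
  -- star (X * P) = P * X
  calc X * rproj A = rproj A * (X * rproj A) := e1.symm
    _ = (rproj A * X) * rproj A := by rw [mul_assoc]
    _ = rproj A * X := by
        -- from e2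
        have : (rproj A * X) * rproj A = rproj A * X := by
          simpa [mul_assoc] using e2
        exact this

/-- selfadjoint idempotent of norm < 1 is zero -/
lemma idem_eq_zero_of_norm_lt {R : H →L[ℂ] H} (hsa : IsSelfAdjoint R)
    (hidem : R * R = R) (hn : ‖R‖ < 1) : R = 0 := by
  have h1 : ‖star R * R‖ = ‖R‖ * ‖R‖ := CStarRing.norm_star_mul_self
  rw [hsa.star_eq, hidem] at h1
  rw [← norm_eq_zero]
  by_contra h0
  have hpos : 0 < ‖R‖ := lt_of_le_of_ne (norm_nonneg R) (Ne.symm h0)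
  have := mul_lt_mul_of_pos_left hn hpos
  rw [mul_one] at this
  linarith

end BorchersAux

/-- **Borchers' lemma, effect version, bounded generator.**
Let `K` be a bounded selfadjoint operator on a complex Hilbert space `H` and
`V t = exp (i t K)` the associated one-parameter unitary group.  If `E₁, E₂`
are effects with `E₁ E₂ = 0` which commute after conjugating `E₂` by `V t`
for all sufficiently small `t`, then `E₁ (V t) E₂ (V t)* = 0` for all `t`. -/
theorem borchers_lemma_effects
    {H : Type*} [NormedAddCommGroup H] [InnerProductSpace ℂ H] [CompleteSpace H]
    (K : H →L[ℂ] H) (hK : IsSelfAdjoint K)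
    (V : ℝ → H →L[ℂ] H)
    (hV : ∀ t : ℝ, V t = NormedSpace.exp ((Complex.I * (t : ℂ)) • K))
    (E₁ E₂ : H →L[ℂ] H)
    (hE₁ : 0 ≤ E₁) (hE₁' : E₁ ≤ 1) (hE₂ : 0 ≤ E₂) (hE₂' : E₂ ≤ 1)
    (horth : E₁ * E₂ = 0)
    (hcomm : ∃ ε > (0 : ℝ), ∀ t : ℝ, |t| < ε →
      E₁ * (V t * E₂ * ContinuousLinearMap.adjoint (V t))
        = (V t * E₂ * ContinuousLinearMap.adjoint (V t)) * E₁) :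
    ∀ t : ℝ, E₁ * (V t * E₂ * ContinuousLinearMap.adjoint (V t)) = 0 := by
  letI : NormedAlgebra ℚ (H →L[ℂ] H) := NormedAlgebra.restrictScalars ℚ ℂ _
  obtain ⟨ε, hε, hcomm⟩ := hcomm
  simp only [← ContinuousLinearMap.star_eq_adjoint] at hcomm ⊢
  have hsE₁ : IsSelfAdjoint E₁ :=
    ((ContinuousLinearMap.nonneg_iff_isPositive E₁).mp hE₁).isSelfAdjoint
  have hsE₂ : IsSelfAdjoint E₂ :=
    ((ContinuousLinearMap.nonneg_iff_isPositive E₂).mp hE₂).isSelfAdjoint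
  set a₁ : H →L[ℂ] H := Complex.I • K with ha₁
  set a₂ : H →L[ℂ] H := (-Complex.I) • K with ha₂
  have hVz : ∀ t : ℝ, V t = NormedSpace.exp ((t : ℂ) • a₁) := by
    intro t; rw [hV t, ha₁, smul_smul, mul_comm]
  have hVstar : ∀ t : ℝ, star (V t) = NormedSpace.exp ((t : ℂ) • a₂) := by
    intro t
    rw [hV t, NormedSpace.star_exp]
    congr 1
    rw [star_smul, hK.star_eq, ha₂, smul_smul]
    congr 1
    simp only [star_mul', Complex.star_def, Complex.conj_I, Complex.conj_ofReal]
    ring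
  have hcomm12 : ∀ t : ℝ, Commute ((t : ℂ) • a₁) ((t : ℂ) • a₂) := by
    intro t
    have c1 : Commute a₁ a₂ := by
      rw [ha₁, ha₂]
      exact ((Commute.refl K).smul_left Complex.I).smul_right (-Complex.I)
    exact (c1.smul_left _).smul_right _
  have hsum : ∀ t : ℝ, (t : ℂ) • a₁ + (t : ℂ) • a₂ = 0 := by
    intro t
    rw [← smul_add, ha₁, ha₂, ← add_smul]
    simp
  have hgroup : ∀ t : ℝ, V t * star (V t) = 1 := by
    intro t
    rw [hVstar t, hVz t, ← NormedSpace.exp_add_of_commute (hcomm12 t), hsum t,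
      NormedSpace.exp_zero]
  have hgroup' : ∀ t : ℝ, star (V t) * V t = 1 := by
    intro t
    rw [hVstar t, hVz t, ← NormedSpace.exp_add_of_commute (hcomm12 t).symm]
    rw [add_comm, hsum t, NormedSpace.exp_zero]
  have hVVapp : ∀ (t : ℝ) (x : H), V t (star (V t) x) = x := by
    intro t x
    have := congrArg (fun T : H →L[ℂ] H => T x) (hgroup t)
    simpa using this
  have hV'Vapp : ∀ (t : ℝ) (x : H), star (V t) (V t x) = x := by
    intro t x
    have := congrArg (fun T : H →L[ℂ] H => T x) (hgroup' t)
    simpa using this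
  have hVisom : ∀ (s : ℝ) (x : H), ‖star (V s) x‖ = ‖x‖ := by
    intro s x
    have h1 : (inner ℂ (star (V s) x) (star (V s) x) : ℂ) = inner ℂ x x := by
      have h := ContinuousLinearMap.adjoint_inner_right (V s) (star (V s) x) x
      rw [← ContinuousLinearMap.star_eq_adjoint] at h
      rw [h, hVVapp]
    rw [@norm_eq_sqrt_re_inner ℂ, @norm_eq_sqrt_re_inner ℂ _ _ _ _ x, h1]
  have hVcont : Continuous fun t : ℝ => V t := by
    have he : (fun t : ℝ => V t) = fun t : ℝ => NormedSpace.exp ((t : ℂ) • a₁) :=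
      funext hVz
    rw [he]
    exact NormedSpace.exp_continuous.comp (Complex.continuous_ofReal.smul continuous_const)
  have hV0 : V 0 = 1 := by
    rw [hVz 0]
    norm_num
  obtain ⟨δ, hδpos, hδ⟩ : ∃ δ > 0, ∀ s : ℝ, |s| < δ → ‖V s - 1‖ < 1 := by
    have hc : ContinuousAt (fun s : ℝ => ‖V s - 1‖) 0 :=
      ((hVcont.sub continuous_const).norm).continuousAt
    rcases Metric.continuousAt_iff.mp hc 1 one_pos with ⟨δ, hδpos, hδ⟩
    refine ⟨δ, hδpos, fun s hs => ?_⟩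
    have := hδ (show dist s 0 < δ by simpa [Real.dist_eq] using hs)
    rw [Real.dist_eq] at this
    have h0 : ‖V (0:ℝ) - 1‖ = 0 := by rw [hV0]; simp
    rw [h0, sub_zero] at this
    calc ‖V s - 1‖ ≤ |‖V s - 1‖| := le_abs_self _
      _ < 1 := this
  -- the key vanishing for small times
  have key : ∀ s : ℝ, |s| < min ε δ → E₁ * (V s * E₂ * star (V s)) = 0 := by
    intro s hs
    have hsε : |s| < ε := lt_of_lt_of_le hs (min_le_left _ _)
    have hsδ : |s| < δ := lt_of_lt_of_le hs (min_le_right _ _)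
    set B : H →L[ℂ] H := V s * E₂ * star (V s) with hB
    have hsB : IsSelfAdjoint B := by
      rw [IsSelfAdjoint, hB]
      simp only [star_mul, star_star, hsE₂.star_eq, mul_assoc]
    set P : H →L[ℂ] H := rproj E₁ with hP
    set R₂ : H →L[ℂ] H := rproj E₂ with hR₂
    set Q : H →L[ℂ] H := V s * R₂ * star (V s) with hQ
    have hQapp : ∀ x, Q x = V s (R₂ (star (V s) x)) := fun x => rfl
    have hBapp : ∀ x, B x = V s (E₂ (star (V s) x)) := fun x => rfl
    have hQsa : IsSelfAdjoint Q := by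
      rw [IsSelfAdjoint, hQ]
      simp only [star_mul, star_star, hR₂, (rproj_isSelfAdjoint E₂).star_eq, mul_assoc]
    have hPB : B * P = P * B := by
      apply rproj_comm hsB
      exact (hcomm s hsε).symm
    have hBrange : ∀ u ∈ closure ((LinearMap.range (B : H →ₗ[ℂ] H) : Submodule ℂ H) : Set H), Q u = u := by
      intro u hu
      have hcl : IsClosed {x : H | Q x = x} := isClosed_eq Q.continuous continuous_id
      refine hcl.closure_subset_iff.mpr ?_ hu
      rintro - ⟨y, rfl⟩
      show Q (B y) = B y
      calc Q (B y) = V s (R₂ (star (V s) (V s (E₂ (star (V s) y))))) := rfl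
        _ = V s (R₂ (E₂ (star (V s) y))) := by rw [hV'Vapp]
        _ = V s (E₂ (star (V s) y)) := by rw [rproj_fix E₂ (apply_mem_rcl E₂ _)]
        _ = B y := rfl
    have hQmem : ∀ x, Q x ∈ closure ((LinearMap.range (B : H →ₗ[ℂ] H) : Submodule ℂ H) : Set H) := by
      intro x
      have h1 : R₂ (star (V s) x) ∈ closure ((LinearMap.range (E₂ : H →ₗ[ℂ] H) : Submodule ℂ H) : Set H) :=
        (mem_rcl_iff E₂ _).mp (rproj_mem E₂ _)
      have h2 : Set.MapsTo (V s) ((LinearMap.range (E₂ : H →ₗ[ℂ] H) : Submodule ℂ H) : Set H)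
          ((LinearMap.range (B : H →ₗ[ℂ] H) : Submodule ℂ H) : Set H) := by
        rintro - ⟨y, rfl⟩
        refine ⟨V s y, ?_⟩
        show V s (E₂ (star (V s) (V s y))) = V s (E₂ y)
        rw [hV'Vapp]
      have h3 := map_mem_closure (V s).continuous h1 h2
      rw [hQapp x]
      exact h3
    have hPmem : ∀ u ∈ closure ((LinearMap.range (B : H →ₗ[ℂ] H) : Submodule ℂ H) : Set H),
        P u ∈ closure ((LinearMap.range (B : H →ₗ[ℂ] H) : Submodule ℂ H) : Set H) := by
      intro u hu
      refine map_mem_closure P.continuous hu ?_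
      rintro - ⟨y, rfl⟩
      refine ⟨P y, ?_⟩
      show B (P y) = P (B y)
      have := congrArg (fun T : H →L[ℂ] H => T y) hPB
      simpa using this
    have e1 : Q * (P * Q) = P * Q := by
      ext x
      exact hBrange _ (hPmem _ (hQmem x))
    have hPQ : P * Q = Q * P := by
      have e2 := congrArg star e1
      rw [star_mul, star_mul, hQsa.star_eq, (rproj_isSelfAdjoint E₁).star_eq] at e2
      calc P * Q = Q * (P * Q) := e1.symm
        _ = (Q * P) * Q := (mul_assoc Q P Q).symm
        _ = Q * P := by rw [← hP] at e2; exact e2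
    have hPidem : P * P = P := by
      ext x
      exact rproj_fix E₁ (rproj_mem E₁ x)
    have hQidem : Q * Q = Q := by
      ext x
      show Q (Q x) = Q x
      calc Q (Q x) = V s (R₂ (star (V s) (V s (R₂ (star (V s) x))))) := rfl
        _ = V s (R₂ (R₂ (star (V s) x))) := by rw [hV'Vapp]
        _ = V s (R₂ (star (V s) x)) := by rw [rproj_fix E₂ (rproj_mem E₂ _)]
        _ = Q x := rfl
    have hPQidem : (P * Q) * (P * Q) = P * Q := by
      calc (P * Q) * (P * Q) = P * ((Q * P) * Q) := by simp only [mul_assoc]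
        _ = P * ((P * Q) * Q) := by rw [← hPQ]
        _ = (P * P) * (Q * Q) := by simp only [mul_assoc]
        _ = P * Q := by rw [hPidem, hQidem]
    have hPQsa : IsSelfAdjoint (P * Q) := by
      rw [IsSelfAdjoint, star_mul, hQsa.star_eq, (rproj_isSelfAdjoint E₁).star_eq, ← hPQ]
    have hPR₂ : P * R₂ = 0 := rproj_orth hsE₁ horth
    have hPQnorm : ‖P * Q‖ < 1 := by
      have hrepr : P * ((V s - 1) * (R₂ * star (V s))) = P * Q := by
        rw [sub_mul, one_mul, mul_sub]
        have h2 : P * (R₂ * star (V s)) = (P * R₂) * star (V s) := (mul_assoc _ _ _).symm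
        rw [h2, hPR₂, zero_mul, sub_zero, hQ]
        simp only [mul_assoc]
      rw [← hrepr]
      have hb : ∀ x, ‖(P * ((V s - 1) * (R₂ * star (V s)))) x‖ ≤ ‖V s - 1‖ * ‖x‖ := by
        intro x
        have e : (P * ((V s - 1) * (R₂ * star (V s)))) x
            = P ((V s - 1) (R₂ (star (V s) x))) := rfl
        rw [e]
        calc ‖P ((V s - 1) (R₂ (star (V s) x)))‖
            ≤ ‖(V s - 1) (R₂ (star (V s) x))‖ := rproj_norm_apply_le E₁ _
          _ ≤ ‖V s - 1‖ * ‖R₂ (star (V s) x)‖ := (V s - 1).le_opNorm _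
          _ ≤ ‖V s - 1‖ * ‖star (V s) x‖ :=
              mul_le_mul_of_nonneg_left (rproj_norm_apply_le E₂ _) (norm_nonneg _)
          _ = ‖V s - 1‖ * ‖x‖ := by rw [hVisom s x]
      exact lt_of_le_of_lt (ContinuousLinearMap.opNorm_le_bound _ (norm_nonneg _) hb)
        (hδ s hsδ)
    have hPQ0 : P * Q = 0 := idem_eq_zero_of_norm_lt hPQsa hPQidem hPQnorm
    have hE₁P : E₁ * P = E₁ := self_mul_rproj hsE₁
    have hQB : Q * B = B := by
      ext x
      exact hBrange _ (subset_closure ⟨x, rfl⟩)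
    calc E₁ * (V s * E₂ * star (V s)) = E₁ * B := by rw [hB]
      _ = (E₁ * P) * (Q * B) := by rw [hE₁P, hQB]
      _ = E₁ * ((P * Q) * B) := by simp only [mul_assoc]
      _ = 0 := by rw [hPQ0, zero_mul, mul_zero]
  -- analytic continuation to all times
  intro t
  have hzero : ∀ φ ψ : H, (inner ℂ ψ ((E₁ * (V t * E₂ * star (V t))) φ) : ℂ) = 0 := by
    intro φ ψ
    set L : (H →L[ℂ] H) →L[ℂ] ℂ :=
      (innerSL ℂ ψ).comp (ContinuousLinearMap.apply ℂ H φ) with hLdef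
    have hLapp : ∀ T : H →L[ℂ] H, L T = (inner ℂ ψ (T φ) : ℂ) := fun T => rfl
    set g : ℂ → ℂ := fun z =>
      L (E₁ * (NormedSpace.exp (z • a₁) * E₂ * NormedSpace.exp (z • a₂))) with hgdef
    have hganalytic : AnalyticOnNhd ℂ g Set.univ := by
      intro z _
      have hlin1 : AnalyticAt ℂ (fun z : ℂ => z • a₁) z := analyticAt_id.smul analyticAt_const
      have hlin2 : AnalyticAt ℂ (fun z : ℂ => z • a₂) z := analyticAt_id.smul analyticAt_const
      have h1 : AnalyticAt ℂ (fun z : ℂ => NormedSpace.exp (z • a₁)) z :=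
        (NormedSpace.exp_analytic _).comp hlin1
      have h2 : AnalyticAt ℂ (fun z : ℂ => NormedSpace.exp (z • a₂)) z :=
        (NormedSpace.exp_analytic _).comp hlin2
      have hOp : AnalyticAt ℂ (fun z : ℂ =>
          E₁ * (NormedSpace.exp (z • a₁) * E₂ * NormedSpace.exp (z • a₂))) z :=
        analyticAt_const.mul ((h1.mul analyticAt_const).mul h2)
      exact (L.analyticAt _).comp hOp
    have hreal : ∀ s : ℝ, g s = (inner ℂ ψ ((E₁ * (V s * E₂ * star (V s))) φ) : ℂ) := by
      intro s
      simp only [hgdef]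
      rw [hLapp, ← hVz s, ← hVstar s]
    have hfreq : ∃ᶠ z in nhdsWithin (0 : ℂ) {z | z ≠ 0}, g z = 0 := by
      set c : ℝ := min ε δ with hc
      have hcpos : 0 < c := lt_min hε hδpos
      have h1n : Filter.Tendsto (fun n : ℕ => (c / 2) * (1 / ((n : ℝ) + 1)))
          Filter.atTop (nhds 0) := by
        have := tendsto_one_div_add_atTop_nhds_zero_nat (𝕜 := ℝ)
        simpa using this.const_mul (c / 2)
      have hucx : Filter.Tendsto (fun n : ℕ => (((c / 2) * (1 / ((n : ℝ) + 1)) : ℝ) : ℂ))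
          Filter.atTop (nhds 0) := by
        have h2 := (Complex.continuous_ofReal.tendsto 0).comp h1n
        rw [Complex.ofReal_zero] at h2
        exact h2
      have hne : ∀ n : ℕ, (((c / 2) * (1 / ((n : ℝ) + 1)) : ℝ) : ℂ) ∈ {z : ℂ | z ≠ 0} := by
        intro n
        have hpos : 0 < (c / 2) * (1 / ((n : ℝ) + 1)) := by positivity
        exact Complex.ofReal_ne_zero.mpr (ne_of_gt hpos)
      have hwithin : Filter.Tendsto (fun n : ℕ => (((c / 2) * (1 / ((n : ℝ) + 1)) : ℝ) : ℂ))
          Filter.atTop (nhdsWithin 0 {z : ℂ | z ≠ 0}) :=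
        tendsto_nhdsWithin_of_tendsto_nhds_of_eventually_within _ hucx
          (Filter.Eventually.of_forall hne)
      refine hwithin.frequently (Filter.Frequently.of_forall fun n => ?_)
      have habs : |(c / 2) * (1 / ((n : ℝ) + 1))| < min ε δ := by
        have h1 : (0:ℝ) < (n : ℝ) + 1 := by positivity
        have h2 : (1 : ℝ) / ((n:ℝ)+1) ≤ 1 := by
          rw [div_le_one h1]; linarith
        have h3 : (c/2) * (1/((n:ℝ)+1)) ≤ c/2 * 1 :=
          mul_le_mul_of_nonneg_left h2 (by positivity)
        rw [mul_one] at h3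
        rw [abs_of_pos (by positivity), hc] at *
        linarith
      rw [hreal, key _ habs]
      simp
    have hEq : Set.EqOn g 0 Set.univ :=
      hganalytic.eqOn_zero_of_preconnected_of_frequently_eq_zero isPreconnected_univ
        (Set.mem_univ 0) hfreq
    have hgt : g t = 0 := hEq (Set.mem_univ _)
    rw [← hreal t]
    exact hgt
  ext x
  have h0 : (E₁ * (V t * E₂ * star (V t))) x = 0 :=
    inner_self_eq_zero.mp (hzero x ((E₁ * (V t * E₂ * star (V t))) x))
  simpa using h0
end

section
/- Let E and F be effects on a complex Hilbert space H. Then the following are equivalent: (a) E F = F E; (b) for every bounded operator T on H, √E √F T √F √E = √F √E T √E √F (i.e., the selective Lüders operations ρ ↦ √E ρ √E and ρ ↦ √F ρ √F commute as operations). -/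
set_option synthInstance.maxHeartbeats 400000
set_option maxHeartbeats 1000000

open scoped NNReal ContinuousMapZero InnerProductSpace

section Aux

variable {H : Type*} [NormedAddCommGroup H] [InnerProductSpace ℂ H] [CompleteSpace H]

/-- Anything commuting with a selfadjoint `a` commutes with `cfcₙHom ha f`. -/
lemma aux_cfcnHom_commute (a b : H →L[ℂ] H) (ha : IsSelfAdjoint a) (hb : IsSelfAdjoint b)
    (hab : a * b = b * a) (g : C(quasispectrum ℝ a, ℝ)₀) :
    cfcₙHom (R := ℝ) ha g * b = b * cfcₙHom (R := ℝ) ha g := by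
  have h0 : ((0 : quasispectrum ℝ a) : ℝ) = 0 := rfl
  have hid : cfcₙHom (R := ℝ) ha (ContinuousMapZero.id (quasispectrum ℝ a)) = a := cfcₙHom_id ha
  induction g using ContinuousMapZero.induction_on_of_compact with
  | zero => simp
  | id => rw [hid]; exact hab
  | star_id =>
    have hstar : star (ContinuousMapZero.id (quasispectrum ℝ a))
        = ContinuousMapZero.id (quasispectrum ℝ a) := by
      ext z; exact star_trivial _
    rw [hstar, hid]; exact hab
  | add f g hf hg => rw [map_add, add_mul, mul_add, hf, hg]
  | mul f g hf hg => rw [map_mul, mul_assoc, hg, ← mul_assoc, hf, mul_assoc]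
  | smul r f hf => rw [map_smul, smul_mul_assoc, hf, mul_smul_comm]
  | frequently f hf =>
    have hcl : IsClosed {g : C(quasispectrum ℝ a, ℝ)₀ |
        cfcₙHom (R := ℝ) ha g * b = b * cfcₙHom (R := ℝ) ha g} :=
      isClosed_eq (((cfcₙHom_isClosedEmbedding ha).continuous).mul continuous_const)
        (continuous_const.mul ((cfcₙHom_isClosedEmbedding ha).continuous))
    have hmem : f ∈ closure {g : C(quasispectrum ℝ a, ℝ)₀ |
        cfcₙHom (R := ℝ) ha g * b = b * cfcₙHom (R := ℝ) ha g} :=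
      mem_closure_iff_frequently.mpr hf
    rwa [hcl.closure_eq] at hmem

lemma aux_cfcn_commute (f : ℝ → ℝ) (a b : H →L[ℂ] H) (ha : IsSelfAdjoint a)
    (hb : IsSelfAdjoint b) (hab : a * b = b * a) :
    cfcₙ f a * b = b * cfcₙ f a := by
  by_cases hf : ContinuousOn f (quasispectrum ℝ a) ∧ f 0 = 0
  · rw [cfcₙ_apply f a hf.1 hf.2 ha]
    exact aux_cfcnHom_commute a b ha hb hab _
  · rcases not_and_or.mp hf with hf' | hf'
    · rw [cfcₙ_apply_of_not_continuousOn a hf']; simp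
    · rw [cfcₙ_apply_of_not_map_zero a hf']; simp

lemma aux_sqrt_commute (a b : H →L[ℂ] H) (ha : 0 ≤ a) (hb : IsSelfAdjoint b)
    (hab : a * b = b * a) : CFC.sqrt a * b = b * CFC.sqrt a := by
  have h1 : CFC.sqrt a = cfcₙ (fun x : ℝ => (NNReal.sqrt x.toNNReal : ℝ)) a := by
    rw [CFC.sqrt, cfcₙ_nnreal_eq_real NNReal.sqrt a ha]
  rw [h1]
  exact aux_cfcn_commute _ a b (.of_nonneg ha) hb hab

end Aux

/-- For effects `E, F` on a complex Hilbert space, `E` and `F` commute iff the selective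
Lüders operations `ρ ↦ √E ρ √E` and `ρ ↦ √F ρ √F` commute as operations, i.e.
`√E √F T √F √E = √F √E T √E √F` for every bounded operator `T`.  (Relativistic
objectivity is equivalent to local commutativity.) -/
theorem commute_iff_lueders_operations_commute
    {H : Type*} [NormedAddCommGroup H] [InnerProductSpace ℂ H] [CompleteSpace H]
    (E F : H →L[ℂ] H) (hE : 0 ≤ E) (hE' : E ≤ 1) (hF : 0 ≤ F) (hF' : F ≤ 1) :
    E * F = F * E ↔
      ∀ T : H →L[ℂ] H,
        CFC.sqrt E * CFC.sqrt F * T * CFC.sqrt F * CFC.sqrt E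
          = CFC.sqrt F * CFC.sqrt E * T * CFC.sqrt E * CFC.sqrt F := by
  set A := CFC.sqrt E with hAdef
  set B := CFC.sqrt F with hBdef
  have hA : (0 : H →L[ℂ] H) ≤ A := CFC.sqrt_nonneg (a := E)
  have hB : (0 : H →L[ℂ] H) ≤ B := CFC.sqrt_nonneg (a := F)
  have hAsa : IsSelfAdjoint A := .of_nonneg hA
  have hBsa : IsSelfAdjoint B := .of_nonneg hB
  have hEsa : IsSelfAdjoint E := .of_nonneg hE
  have hFsa : IsSelfAdjoint F := .of_nonneg hF
  have hA2 : A * A = E := CFC.sqrt_mul_sqrt_self E hE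
  have hB2 : B * B = F := CFC.sqrt_mul_sqrt_self F hF
  have hstarU : star (A * B) = B * A := by
    rw [star_mul, hAsa.star_eq, hBsa.star_eq]
  constructor
  · -- forward direction
    intro hEF T
    have h1 : A * F = F * A := aux_sqrt_commute E F hE hFsa hEF
    have h2 : B * A = A * B := aux_sqrt_commute F A hF hAsa h1.symm
    have key : (A * B) * (T * (B * A)) = (B * A) * (T * (A * B)) := by rw [h2]
    simpa only [mul_assoc] using key
  · -- backward direction
    intro h
    by_cases hU0 : A * B = 0
    · have hBA : B * A = 0 := by rw [← hstarU, hU0, star_zero]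
      have e1 : E * F = A * ((A * B) * B) := by
        rw [← hA2, ← hB2, mul_assoc, ← mul_assoc A B B]
      have e2 : F * E = B * ((B * A) * A) := by
        rw [← hA2, ← hB2, mul_assoc, ← mul_assoc B A A]
      rw [e1, e2, hU0, hBA]; simp
    · -- pointwise consequence of the hypothesis with rank-one `T`
      have key : ∀ x y z : H, (inner ℂ y (B (A z)) : ℂ) • A (B x)
          = (inner ℂ y (A (B z)) : ℂ) • B (A x) := by
        intro x y z
        have hT := DFunLike.congr_fun (h ((innerSL ℂ y).smulRight x)) z
        simpa only [ContinuousLinearMap.mul_apply, ContinuousLinearMap.smulRight_apply,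
          innerSL_apply_apply, map_smul] using hT
      have hflip : ∀ y z : H, (inner ℂ y (B (A z)) : ℂ) = inner ℂ (A (B y)) z := by
        intro y z
        have h1 : B (A z) = (ContinuousLinearMap.adjoint (A * B)) z := by
          rw [← ContinuousLinearMap.star_eq_adjoint, hstarU]; rfl
        rw [h1, ContinuousLinearMap.adjoint_inner_right]; rfl
      obtain ⟨y₀, hy₀⟩ : ∃ w, A (B w) ≠ 0 := by
        by_contra hc
        push_neg at hc
        exact hU0 (ContinuousLinearMap.ext fun w => by
          simpa [ContinuousLinearMap.mul_apply] using hc w)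
      set w : H := A (B y₀) with hwdef
      set n : ℂ := inner ℂ w w with hndef
      have hn : n ≠ 0 := inner_self_ne_zero.mpr hy₀
      set c : ℂ := inner ℂ y₀ (A (B w)) with hcdef
      have key2 : ∀ x, n • A (B x) = c • B (A x) := by
        intro x
        have := key x y₀ w
        rwa [hflip y₀ w, ← hwdef, ← hndef, ← hcdef] at this
      set ν : ℂ := c / n with hνdef
      have hU : A * B = ν • (B * A) := by
        ext x
        have h1 : A (B x) = ν • B (A x) := by
          calc A (B x) = n⁻¹ • (n • A (B x)) := (inv_smul_smul₀ hn _).symm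
            _ = n⁻¹ • (c • B (A x)) := by rw [key2 x]
            _ = ν • B (A x) := by rw [smul_smul, hνdef, div_eq_inv_mul]
        simpa [ContinuousLinearMap.mul_apply] using h1
      have hν : ν ≠ 0 := by
        intro h0
        exact hU0 (by rw [hU, h0, zero_smul])
      -- the positive operator S
      set S : H →L[ℂ] H := (A * B) * (B * A) with hSdef
      have hS0 : (0 : H →L[ℂ] H) ≤ S := by
        have := mul_star_self_nonneg (A * B)
        rwa [hstarU] at this
      have hSsa : IsSelfAdjoint S := .of_nonneg hS0
      have hSne : S ≠ 0 := by
        intro h0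
        apply hU0
        have h1 : ‖A * B‖ * ‖A * B‖ = 0 := by
          rw [← CStarRing.norm_self_mul_star (x := A * B), hstarU, ← hSdef, h0, norm_zero]
        exact norm_eq_zero.mp (mul_self_eq_zero.mp h1)
      have hEF : E * F = (ν * ν) • S := by
        have h1 : E * F = A * ((A * B) * B) := by
          rw [← hA2, ← hB2, mul_assoc, ← mul_assoc A B B]
        rw [h1, hU, smul_mul_assoc, mul_smul_comm]
        have h2 : A * ((B * A) * B) = (A * B) * (A * B) := by
          simp only [mul_assoc]
        rw [h2]
        nth_rewrite 2 [hU]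
        rw [mul_smul_comm, smul_smul, hSdef]
      have hSstar : star S = S := hSsa.star_eq
      have hFE : F * E = (star ν * star ν) • S := by
        have h1 : F * E = star (E * F) := by
          rw [star_mul, hEsa.star_eq, hFsa.star_eq]
        rw [h1, hEF, star_smul, hSstar, star_mul']
      -- spectral argument: ν² is real
      haveI : Nontrivial (H →L[ℂ] H) := nontrivial_of_ne S 0 hSne
      have htS : ((‖S‖ : ℝ) : ℂ) ∈ spectrum ℂ S := by
        have h1 : ‖S‖ ∈ spectrum ℝ S := CStarAlgebra.norm_mem_spectrum_of_nonneg hS0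
        simpa using spectrum.algebraMap_mem ℂ h1
      have ht0 : (‖S‖ : ℂ) ≠ 0 := by
        simpa using norm_ne_zero_iff.mpr hSne
      have hνν : ν * ν ≠ 0 := mul_ne_zero hν hν
      have hz1 : (ν * ν) * (‖S‖ : ℂ) ∈ spectrum ℂ (E * F) := by
        rw [hEF, show ((ν * ν) • S) = (Units.mk0 (ν * ν) hνν) • S from rfl,
          spectrum.unit_smul_eq_smul]
        exact ⟨_, htS, rfl⟩
      have hz0 : (ν * ν) * (‖S‖ : ℂ) ≠ 0 := mul_ne_zero hνν ht0
      have hswap : spectrum ℂ (E * F) \ {0} = spectrum ℂ S \ {0} := by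
        have e1 : E * F = A * (A * (B * B)) := by
          rw [← hA2, ← hB2, mul_assoc]
        have e2 : (A * (B * B)) * A = S := by
          rw [hSdef]; simp only [mul_assoc]
        rw [e1, ← e2]
        exact spectrum.nonzero_mul_comm A (A * (B * B))
      have hz2 : (ν * ν) * (‖S‖ : ℂ) ∈ spectrum ℂ S := by
        have : (ν * ν) * (‖S‖ : ℂ) ∈ spectrum ℂ (E * F) \ {0} := ⟨hz1, hz0⟩
        rw [hswap] at this
        exact this.1
      have hreal : (((((ν * ν) * (‖S‖ : ℂ)).re : ℝ) : ℂ)) = (ν * ν) * (‖S‖ : ℂ) := by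
        have := hSsa.spectrumRestricts.rightInvOn hz2
        simpa using this
      have him : ((ν * ν) * (‖S‖ : ℂ)).im = 0 := by
        rw [← hreal]; exact Complex.ofReal_im _
      have him2 : (ν * ν).im * ‖S‖ = 0 := by
        simpa [Complex.mul_im] using him
      have him3 : (ν * ν).im = 0 := by
        rcases mul_eq_zero.mp him2 with h' | h'
        · exact h'
        · exact absurd h' (norm_ne_zero_iff.mpr hSne)
      have hcanc : star (ν * ν) = ν * ν := by
        rw [RCLike.star_def]
        exact Complex.conj_eq_iff_im.mpr him3
      rw [hEF, hFE, ← star_mul', hcanc]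
end

section
/- (Schlieder–Malament theorem, projection version, bounded generators.) Let H be a complex Hilbert space, let H₀, K₁, K₂, K₃ be pairwise commuting bounded selfadjoint operators on H, and for a = (a₀,a₁,a₂,a₃) ∈ ℝ⁴ let U(a) = exp(i(a₀H₀ − a₁K₁ − a₂K₂ − a₃K₃)) be the associated unitary representation of the translation group (each generator being bounded, its spectrum is bounded below, so the relativistic spectrum condition holds in every timelike direction). Let P assign to each time t ∈ ℝ and each bounded set Δ ⊆ ℝ³ an orthogonal projection P(t,Δ) on H such that: (1) (covariance) U(a) P(t,Δ) U(a)* = P(t+a₀, Δ+(a₁,a₂,a₃)) for all a ∈ ℝ⁴; (2) (localizability) if Δ₁ ∩ Δ₂ = ∅ then P(t,Δ₁) P(t,Δ₂) = 0; (3) (local commutativity) if inf{‖x−y‖ : x ∈ Δ₁, y ∈ Δ₂} > |t₁ − t₂| then P(t₁,Δ₁) P(t₂,Δ₂) = P(t₂,Δ₂) P(t₁,Δ₁). Then P(t,Δ) = 0 for every t ∈ ℝ and every bounded Δ ⊆ ℝ³. -/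
open Bornology

set_option maxHeartbeats 1000000

/-- **Schlieder–Malament theorem (projection version, bounded generators).**
A translation-covariant, localizable, locally commutative projection-valued localization
`(t, Δ) ↦ P(t,Δ)` over a unitary translation representation generated by pairwise
commuting bounded selfadjoint operators is trivial: `P(t,Δ) = 0` for every bounded `Δ`. -/
theorem schlieder_malament_projections
    {H : Type*} [NormedAddCommGroup H] [InnerProductSpace ℂ H] [CompleteSpace H]
    (H₀ : H →L[ℂ] H) (K : Fin 3 → (H →L[ℂ] H))
    (hH₀sa : IsSelfAdjoint H₀) (hKsa : ∀ j, IsSelfAdjoint (K j))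
    (hH₀K : ∀ j, Commute H₀ (K j)) (hKK : ∀ i j, Commute (K i) (K j))
    (U : ℝ → EuclideanSpace ℝ (Fin 3) → (H →L[ℂ] H))
    (hU : ∀ (a₀ : ℝ) (v : EuclideanSpace ℝ (Fin 3)),
      U a₀ v = NormedSpace.exp
        (Complex.I • ((a₀ : ℂ) • H₀ - ∑ j, (v j : ℂ) • K j)))
    (P : ℝ → Set (EuclideanSpace ℝ (Fin 3)) → (H →L[ℂ] H))
    -- each P(t,Δ) is an orthogonal projection
    (hproj : ∀ (t : ℝ) (Δ : Set (EuclideanSpace ℝ (Fin 3))), IsBounded Δ →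
      IsSelfAdjoint (P t Δ) ∧ P t Δ * P t Δ = P t Δ)
    -- (1) translation covariance
    (hcov : ∀ (t : ℝ) (Δ : Set (EuclideanSpace ℝ (Fin 3))), IsBounded Δ →
      ∀ (a₀ : ℝ) (v : EuclideanSpace ℝ (Fin 3)),
        U a₀ v * P t Δ * ContinuousLinearMap.adjoint (U a₀ v)
          = P (t + a₀) ((fun x => x + v) '' Δ))
    -- (2) localizability
    (hloc : ∀ (t : ℝ) (Δ₁ Δ₂ : Set (EuclideanSpace ℝ (Fin 3))),
      IsBounded Δ₁ → IsBounded Δ₂ → Δ₁ ∩ Δ₂ = ∅ → P t Δ₁ * P t Δ₂ = 0)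
    -- (3) local commutativity for spacelike separated sets
    (hlc : ∀ (t₁ t₂ : ℝ) (Δ₁ Δ₂ : Set (EuclideanSpace ℝ (Fin 3))),
      IsBounded Δ₁ → IsBounded Δ₂ →
      (∃ d : ℝ, |t₁ - t₂| < d ∧ ∀ x ∈ Δ₁, ∀ y ∈ Δ₂, d ≤ dist x y) →
      P t₁ Δ₁ * P t₂ Δ₂ = P t₂ Δ₂ * P t₁ Δ₁) :
    ∀ (t : ℝ) (Δ : Set (EuclideanSpace ℝ (Fin 3))), IsBounded Δ → P t Δ = 0 := by
  classical
  let +nondep : NormedAlgebra ℚ (H →L[ℂ] H) := .restrictScalars ℚ ℂ (H →L[ℂ] H)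
  intro t Δ hΔ
  obtain ⟨hPsa, hPidem⟩ := hproj t Δ hΔ
  -- a diameter bound for Δ
  obtain ⟨C, hC⟩ := Metric.isBounded_iff.mp hΔ
  set D : ℝ := max C 0 with hDdef
  have hD0 : (0 : ℝ) ≤ D := le_max_right _ _
  have hD : ∀ x ∈ Δ, ∀ y ∈ Δ, dist x y ≤ D := fun x hx y hy =>
    (hC hx hy).trans (le_max_left _ _)
  -- the norm of a projection is 0 or 1
  have hnorm01 : ∀ E : H →L[ℂ] H, IsSelfAdjoint E → E * E = E → ‖E‖ = 0 ∨ ‖E‖ = 1 := by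
    intro E h1 h2
    have h3 : ‖E‖ * ‖E‖ = ‖E‖ := by
      conv_rhs => rw [← h2]
      rw [← CStarRing.norm_star_mul_self, h1.star_eq]
    rcases eq_or_ne ‖E‖ 0 with h | h
    · exact Or.inl h
    · right
      field_simp at h3
      linarith [h3]
  -- unitarity of U
  have hstarU : ∀ (s : ℝ) (v : EuclideanSpace ℝ (Fin 3)), star (U s v) * U s v = 1 := by
    intro s v
    have hBsa : IsSelfAdjoint ((s : ℂ) • H₀ - ∑ j, (v j : ℂ) • K j) := by
      show star _ = _
      simp [star_sub, star_smul, star_sum, hH₀sa.star_eq, (hKsa _).star_eq,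
        Complex.star_def, Complex.conj_ofReal]
    have hskew : star (Complex.I • ((s : ℂ) • H₀ - ∑ j, (v j : ℂ) • K j))
        = -(Complex.I • ((s : ℂ) • H₀ - ∑ j, (v j : ℂ) • K j)) := by
      rw [star_smul, hBsa.star_eq, Complex.star_def, Complex.conj_I, neg_smul]
    rw [hU, NormedSpace.star_exp, hskew,
      ← NormedSpace.exp_add_of_commute (Commute.neg_left (Commute.refl _)),
      neg_add_cancel, NormedSpace.exp_zero]
  -- the key vanishing lemma for far spatial translates
  have key : ∀ v : EuclideanSpace ℝ (Fin 3), D < ‖v‖ →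
      ∀ s : ℝ, |s| < ‖v‖ - D → P t Δ * (U s v * P t Δ * star (U s v)) = 0 := by
    intro v hv
    set Δv : Set (EuclideanSpace ℝ (Fin 3)) := (fun x => x + v) '' Δ with hΔvdef
    have hΔv : IsBounded Δv := by
      rw [Metric.isBounded_iff]
      refine ⟨C, ?_⟩
      rintro _ ⟨x, hx, rfl⟩ _ ⟨y, hy, rfl⟩
      simpa [dist_add_right] using hC hx hy
    have hQ : ∀ s : ℝ, U s v * P t Δ * star (U s v) = P (t + s) Δv := by
      intro s
      rw [ContinuousLinearMap.star_eq_adjoint, hcov t Δ hΔ s v]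
    -- disjointness at equal times
    have hdisj : Δ ∩ Δv = ∅ := by
      ext x
      simp only [Set.mem_inter_iff, Set.mem_empty_iff_false, iff_false, not_and, hΔvdef,
        Set.mem_image, not_exists]
      intro hx y hy
      intro hxy
      have h1 := hD _ hy _ hx
      rw [← hxy, dist_self_add_right] at h1
      linarith
    have h0 : P t Δ * P t Δv = 0 := hloc t Δ Δv hΔ hΔv hdisj
    -- local commutativity for |s| < ‖v‖ - D
    have hcomm : ∀ s : ℝ, |s| < ‖v‖ - D →
        P t Δ * P (t + s) Δv = P (t + s) Δv * P t Δ := by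
      intro s hs
      apply hlc t (t + s) Δ Δv hΔ hΔv
      refine ⟨‖v‖ - D, by rwa [sub_add_cancel_left, abs_neg], ?_⟩
      rintro x hx _ ⟨y, hy, rfl⟩
      have h1 : dist y (y + v) ≤ dist y x + dist x (y + v) := dist_triangle _ _ _
      have h2 : dist y x ≤ D := hD _ hy _ hx
      rw [dist_self_add_right] at h1
      linarith
    obtain ⟨hQsa, hQidem⟩ := hproj t Δv hΔv
    -- P t Δ * P (t+u) Δv is a projection for |u| < ‖v‖ - D
    have hEproj : ∀ u : ℝ, |u| < ‖v‖ - D →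
        IsSelfAdjoint (P t Δ * P (t + u) Δv) ∧
          (P t Δ * P (t + u) Δv) * (P t Δ * P (t + u) Δv) = P t Δ * P (t + u) Δv := by
      intro u hu
      obtain ⟨hsaQ, hidQ⟩ := hproj (t + u) Δv hΔv
      constructor
      · show star _ = _
        rw [star_mul, hsaQ.star_eq, hPsa.star_eq, ← hcomm u hu]
      · rw [(Commute.mul_mul_mul_comm ((hcomm u hu).symm) (P t Δ) (P (t + u) Δv)),
          hPidem, hidQ]
    -- continuity of u ↦ ‖P t Δ * P (t+u) Δv‖
    have hUcont : Continuous fun u : ℝ => U u v := by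
      have hA : Continuous fun u : ℝ =>
          Complex.I • ((u : ℂ) • H₀ - ∑ j, (v j : ℂ) • K j) := by
        exact Continuous.const_smul (g := fun u : ℝ => (u : ℂ) • H₀ - ∑ j, (v j : ℂ) • K j)
          ((Complex.continuous_ofReal.smul continuous_const).sub continuous_const) Complex.I
      have := (NormedSpace.exp_continuous (𝔸 := H →L[ℂ] H)).comp hA
      simp only [hU]
      exact this
    have hcont : Continuous fun u : ℝ => ‖P t Δ * P (t + u) Δv‖ := by
      simp only [← hQ]
      exact (continuous_const.mul
        ((hUcont.mul continuous_const).mul (continuous_star.comp hUcont))).norm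
    -- conclude by IVT
    intro s hs
    rw [hQ s]
    by_contra hne
    have h1 : ‖P t Δ * P (t + s) Δv‖ = 1 := by
      obtain ⟨hsa2, hid2⟩ := hEproj s hs
      rcases hnorm01 _ hsa2 hid2 with h | h
      · exact absurd (norm_eq_zero.mp h) hne
      · exact h
    have hcg : ContinuousOn (fun u : ℝ => ‖P t Δ * P (t + u * s) Δv‖) (Set.Icc 0 1) :=
      (hcont.comp (continuous_id.mul continuous_const)).continuousOn
    have hIVT := intermediate_value_Icc (zero_le_one (α := ℝ)) hcg
    have hmem : (1 / 2 : ℝ) ∈ Set.Icc ‖P t Δ * P (t + 0 * s) Δv‖ ‖P t Δ * P (t + 1 * s) Δv‖ := by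
      rw [zero_mul, add_zero, h0, norm_zero, one_mul, h1]
      norm_num
    obtain ⟨u, hu, hgu⟩ := hIVT hmem
    have hus : |u * s| < ‖v‖ - D := by
      rw [abs_mul]
      have hu1 : |u| ≤ 1 := abs_le.mpr ⟨by linarith [hu.1], hu.2⟩
      have := abs_nonneg s
      nlinarith
    obtain ⟨hsa2, hid2⟩ := hEproj (u * s) hus
    have hgu' : ‖P t Δ * P (t + u * s) Δv‖ = 1 / 2 := hgu
    rcases hnorm01 _ hsa2 hid2 with h | h <;> rw [h] at hgu' <;> norm_num at hgu'
  -- analyticity of a ↦ P U(a) P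
  have hfa : AnalyticOnNhd ℝ
      (fun p : ℝ × EuclideanSpace ℝ (Fin 3) => P t Δ * U p.1 p.2 * P t Δ) Set.univ := by
    simp only [hU]
    intro p _
    have hA : AnalyticAt ℝ (fun p : ℝ × EuclideanSpace ℝ (Fin 3) =>
        Complex.I • ((p.1 : ℂ) • H₀ - ∑ j, (p.2 j : ℂ) • K j)) p := by
      apply AnalyticAt.smul (analyticAt_const (v := Complex.I))
      apply AnalyticAt.sub
      · exact ((Complex.ofRealCLM.analyticAt _).comp analyticAt_fst).smul analyticAt_const
      · apply Finset.analyticAt_fun_sum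
        intro j _
        exact ((Complex.ofRealCLM.analyticAt _).comp
          (((EuclideanSpace.proj j : EuclideanSpace ℝ (Fin 3) →L[ℝ] ℝ).analyticAt _).comp
            analyticAt_snd)).smul analyticAt_const
    have hexp : AnalyticAt ℝ (NormedSpace.exp : (H →L[ℂ] H) → (H →L[ℂ] H))
        (Complex.I • ((p.1 : ℂ) • H₀ - ∑ j, (p.2 j : ℂ) • K j)) :=
      (NormedSpace.exp_analytic (𝕂 := ℂ) _).restrictScalars
    have h2 : AnalyticAt ℝ (fun q : ℝ × EuclideanSpace ℝ (Fin 3) =>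
        NormedSpace.exp (Complex.I • ((q.1 : ℂ) • H₀ - ∑ j, (q.2 j : ℂ) • K j))) p :=
      AnalyticAt.comp (g := (NormedSpace.exp : (H →L[ℂ] H) → (H →L[ℂ] H))) hexp hA
    exact (analyticAt_const.mul h2).mul analyticAt_const
  -- the open region where P U(a) P vanishes
  set v₀ : EuclideanSpace ℝ (Fin 3) := EuclideanSpace.single 0 (D + 2) with hv₀def
  have hv₀ : ‖v₀‖ = D + 2 := by
    rw [hv₀def, EuclideanSpace.norm_single, Real.norm_eq_abs, abs_of_nonneg (by linarith)]
  have hopen : IsOpen {p : ℝ × EuclideanSpace ℝ (Fin 3) | D + |p.1| < ‖p.2‖} :=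
    isOpen_lt (continuous_const.add (continuous_fst.abs)) continuous_snd.norm
  have hmem : ((0 : ℝ), v₀) ∈ {p : ℝ × EuclideanSpace ℝ (Fin 3) | D + |p.1| < ‖p.2‖} := by
    show D + |(0 : ℝ)| < ‖v₀‖
    rw [abs_zero, add_zero, hv₀]
    linarith
  have hev : (fun p : ℝ × EuclideanSpace ℝ (Fin 3) => P t Δ * U p.1 p.2 * P t Δ)
      =ᶠ[nhds ((0 : ℝ), v₀)] fun _ => 0 := by
    filter_upwards [hopen.mem_nhds hmem] with p hp
    have hp' : D + |p.1| < ‖p.2‖ := hp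
    have habs : (0 : ℝ) ≤ |p.1| := abs_nonneg _
    have h1 := key p.2 (by linarith) p.1 (by linarith)
    have h3 : P t Δ * (U p.1 p.2 * P t Δ * star (U p.1 p.2)) * U p.1 p.2
        = P t Δ * U p.1 p.2 * P t Δ := by
      have hassoc : P t Δ * (U p.1 p.2 * P t Δ * star (U p.1 p.2)) * U p.1 p.2
          = P t Δ * U p.1 p.2 * P t Δ * (star (U p.1 p.2) * U p.1 p.2) := by
        noncomm_ring
      rw [hassoc, hstarU p.1 p.2, mul_one]
    show P t Δ * U p.1 p.2 * P t Δ = 0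
    rw [← h3, h1, zero_mul]
  -- identity theorem
  have hzero : AnalyticOnNhd ℝ
      (fun _ : ℝ × EuclideanSpace ℝ (Fin 3) => (0 : H →L[ℂ] H)) Set.univ :=
    fun _ _ => analyticAt_const
  have heq := hfa.eqOn_of_preconnected_of_eventuallyEq hzero isPreconnected_univ
    (Set.mem_univ _) hev
  have hf00 := heq (Set.mem_univ ((0 : ℝ), (0 : EuclideanSpace ℝ (Fin 3))))
  have hU00 : U (0 : ℝ) (0 : EuclideanSpace ℝ (Fin 3)) = 1 := by
    rw [hU]
    simp only [PiLp.zero_apply, Complex.ofReal_zero, zero_smul, Finset.sum_const_zero,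
      sub_zero, smul_zero]
    exact NormedSpace.exp_zero
  have hf00' : P t Δ * U (0 : ℝ) (0 : EuclideanSpace ℝ (Fin 3)) * P t Δ = 0 := hf00
  rw [hU00, mul_one, hPidem] at hf00'
  exact hf00'
end

section
/- (Schlieder's theorem for effects, bounded generators.) Let H be a complex Hilbert space, let H₀, K₁, K₂, K₃ be pairwise commuting bounded selfadjoint operators on H, and for a = (a₀,a₁,a₂,a₃) ∈ ℝ⁴ let U(a) = exp(i(a₀H₀ − a₁K₁ − a₂K₂ − a₃K₃)). Let E assign to each time t ∈ ℝ and each bounded set Δ ⊆ ℝ³ a bounded operator E(t,Δ) on H with 0 ≤ E(t,Δ) ≤ I (an effect), such that: (1) (covariance) U(a) E(t,Δ) U(a)* = E(t+a₀, Δ+(a₁,a₂,a₃)) for all a ∈ ℝ⁴; (2) (localizability) if Δ₁ ∩ Δ₂ = ∅ then E(t,Δ₁) E(t,Δ₂) = 0; (3) (local commutativity) if inf{‖x−y‖ : x ∈ Δ₁, y ∈ Δ₂} > |t₁ − t₂| then E(t₁,Δ₁) E(t₂,Δ₂) = E(t₂,Δ₂) E(t₁,Δ₁). Then E(t,Δ)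 = 0 for every t ∈ ℝ and every bounded Δ ⊆ ℝ³. -/
open Bornology

/-- **Schlieder's theorem for effects (bounded generators).**
A translation-covariant, localizable, locally commutative effect-valued localization
`(t, Δ) ↦ E(t,Δ)` over a unitary translation representation generated by pairwise
commuting bounded selfadjoint operators is trivial: `E(t,Δ) = 0` for every bounded `Δ`. -/
theorem schlieder_theorem_effects
    {H : Type*} [NormedAddCommGroup H] [InnerProductSpace ℂ H] [CompleteSpace H]
    (H₀ : H →L[ℂ] H) (K : Fin 3 → (H →L[ℂ] H))
    (hH₀sa : IsSelfAdjoint H₀) (hKsa : ∀ j, IsSelfAdjoint (K j))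
    (hH₀K : ∀ j, Commute H₀ (K j)) (hKK : ∀ i j, Commute (K i) (K j))
    (U : ℝ → EuclideanSpace ℝ (Fin 3) → (H →L[ℂ] H))
    (hU : ∀ (a₀ : ℝ) (v : EuclideanSpace ℝ (Fin 3)),
      U a₀ v = NormedSpace.exp
        (Complex.I • ((a₀ : ℂ) • H₀ - ∑ j, (v j : ℂ) • K j)))
    (E : ℝ → Set (EuclideanSpace ℝ (Fin 3)) → (H →L[ℂ] H))
    -- each E(t,Δ) is an effect
    (heff : ∀ (t : ℝ) (Δ : Set (EuclideanSpace ℝ (Fin 3))), IsBounded Δ →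
      0 ≤ E t Δ ∧ E t Δ ≤ 1)
    -- (1) translation covariance
    (hcov : ∀ (t : ℝ) (Δ : Set (EuclideanSpace ℝ (Fin 3))), IsBounded Δ →
      ∀ (a₀ : ℝ) (v : EuclideanSpace ℝ (Fin 3)),
        U a₀ v * E t Δ * ContinuousLinearMap.adjoint (U a₀ v)
          = E (t + a₀) ((fun x => x + v) '' Δ))
    -- (2) localizability
    (hloc : ∀ (t : ℝ) (Δ₁ Δ₂ : Set (EuclideanSpace ℝ (Fin 3))),
      IsBounded Δ₁ → IsBounded Δ₂ → Δ₁ ∩ Δ₂ = ∅ → E t Δ₁ * E t Δ₂ = 0)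
    -- (3) local commutativity for spacelike separated sets
    (hlc : ∀ (t₁ t₂ : ℝ) (Δ₁ Δ₂ : Set (EuclideanSpace ℝ (Fin 3))),
      IsBounded Δ₁ → IsBounded Δ₂ →
      (∃ d : ℝ, |t₁ - t₂| < d ∧ ∀ x ∈ Δ₁, ∀ y ∈ Δ₂, d ≤ dist x y) →
      E t₁ Δ₁ * E t₂ Δ₂ = E t₂ Δ₂ * E t₁ Δ₁) :
    ∀ (t : ℝ) (Δ : Set (EuclideanSpace ℝ (Fin 3))), IsBounded Δ → E t Δ = 0 := by
  intro t Δ hΔ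
  obtain ⟨hA0, -⟩ := heff t Δ hΔ
  set A := E t Δ with hAdef
  have hAsa : IsSelfAdjoint A := hA0.isSelfAdjoint
  obtain ⟨M, hM⟩ := hΔ.subset_closedBall 0
  set T : H →L[ℂ] H := -(Complex.I • K 0) with hTdef
  have hstar : ∀ r : ℝ, star ((r : ℂ) • T) = -((r : ℂ) • T) := by
    intro r
    have h1 : star T = -T := by
      simp only [hTdef, star_neg, star_smul, Complex.star_def, Complex.conj_I,
        (hKsa 0).star_eq, neg_smul, neg_neg]
    rw [star_smul, h1, Complex.star_def, Complex.conj_ofReal, smul_neg]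
  have hU1 : ∀ z : ℂ, NormedSpace.exp (-(z • T)) * NormedSpace.exp (z • T) = 1 := by
    intro z
    letI : NormedAlgebra ℚ (H →L[ℂ] H) := .restrictScalars ℚ ℂ (H →L[ℂ] H)
    rw [← NormedSpace.exp_add_of_commute (Commute.refl (z • T)).neg_left, neg_add_cancel,
      NormedSpace.exp_zero]
  -- Key claim: for all large real r, A * exp(r • T) * A = 0.
  have key : ∀ r : ℝ, 2 * M + 1 ≤ r → A * NormedSpace.exp ((r : ℂ) • T) * A = 0 := by
    intro r hr
    set v : EuclideanSpace ℝ (Fin 3) := EuclideanSpace.single 0 r with hv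
    have hnv : ‖v‖ = |r| := by
      rw [hv, EuclideanSpace.norm_single, Real.norm_eq_abs]
    have himgB : IsBounded ((fun x => x + v) '' Δ) := by
      rw [← Set.add_singleton]
      exact hΔ.add isBounded_singleton
    have hdisj : Δ ∩ ((fun x => x + v) '' Δ) = ∅ := by
      ext x
      simp only [Set.mem_inter_iff, Set.mem_image, Set.mem_empty_iff_false, iff_false, not_and]
      rintro hx ⟨y, hy, hxy⟩
      have h1 : ‖x‖ ≤ M := by
        simpa [mem_closedBall_zero_iff] using hM hx
      have h2 : ‖y‖ ≤ M := by
        simpa [mem_closedBall_zero_iff] using hM hy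
      have h3 : v = x - y := by rw [← hxy]; abel
      have h4 : ‖v‖ ≤ ‖x‖ + ‖y‖ := by rw [h3]; exact norm_sub_le _ _
      have h5 : r ≤ |r| := le_abs_self r
      rw [hnv] at h4
      linarith
    have hz := hloc t Δ _ hΔ himgB hdisj
    have hc := hcov t Δ hΔ 0 v
    rw [add_zero] at hc
    have hUv : U 0 v = NormedSpace.exp ((r : ℂ) • T) := by
      rw [hU]
      congr 1
      rw [Fin.sum_univ_three]
      have e0 : v 0 = r := by simp [hv, EuclideanSpace.single_apply]
      have e1 : v 1 = 0 := by simp [hv, EuclideanSpace.single_apply]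
      have e2 : v 2 = 0 := by simp [hv, EuclideanSpace.single_apply]
      rw [e0, e1, e2, hTdef]
      push_cast
      module
    have hadj : ContinuousLinearMap.adjoint (NormedSpace.exp ((r : ℂ) • T))
        = NormedSpace.exp (-((r : ℂ) • T)) := by
      rw [← ContinuousLinearMap.star_eq_adjoint, NormedSpace.star_exp, hstar r]
    rw [hUv, hadj] at hc
    rw [← hc] at hz
    have hz' := congrArg (fun B => B * NormedSpace.exp ((r : ℂ) • T)) hz
    simp only [zero_mul] at hz'
    calc A * NormedSpace.exp ((r : ℂ) • T) * A
        = A * (NormedSpace.exp ((r : ℂ) • T) * A * NormedSpace.exp (-((r : ℂ) • T))) *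
            NormedSpace.exp ((r : ℂ) • T) := by
          rw [mul_assoc, mul_assoc, mul_assoc, hU1 ((r : ℂ)), mul_one, ← mul_assoc]
      _ = 0 := hz'
  -- Analytic continuation: A * A = 0.
  have hin : ∀ φ ψ : H, (inner ℂ φ ((A * A) ψ) : ℂ) = 0 := by
    intro φ ψ
    set L : (H →L[ℂ] H) →L[ℂ] ℂ :=
      (innerSL ℂ φ).comp (A.comp (ContinuousLinearMap.apply ℂ H (A ψ))) with hL
    set F : ℂ → ℂ := fun z => L (NormedSpace.exp (z • T)) with hF
    have hanal : AnalyticOnNhd ℂ F Set.univ := by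
      intro z _
      have h1 : AnalyticAt ℂ (fun z : ℂ => z • T) z :=
        ((ContinuousLinearMap.id ℂ ℂ).smulRight T).analyticAt z
      exact (L.analyticAt _).comp ((NormedSpace.exp_analytic _).comp h1)
    set z₀ : ℂ := ((2 * M + 2 : ℝ) : ℂ) with hz₀
    set u : ℕ → ℂ := fun n => ((2 * M + 2 + 1 / (n + 1) : ℝ) : ℂ) with hu
    have htend : Filter.Tendsto u Filter.atTop (nhdsWithin z₀ {z₀}ᶜ) := by
      apply tendsto_nhdsWithin_of_tendsto_nhds_of_eventually_within
      · have hre : Filter.Tendsto (fun n : ℕ => 2 * M + 2 + 1 / (n + 1 : ℝ))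
            Filter.atTop (nhds (2 * M + 2)) := by
          simpa using (tendsto_const_nhds (x := 2 * M + 2)).add tendsto_one_div_add_atTop_nhds_zero_nat
        exact (Complex.continuous_ofReal.tendsto _).comp hre
      · refine Filter.Eventually.of_forall fun n => ?_
        simp only [Set.mem_compl_iff, Set.mem_singleton_iff, hu, hz₀]
        intro hcon
        have : (2 * M + 2 + 1 / (n + 1 : ℝ)) = 2 * M + 2 := by
          exact_mod_cast hcon
        have hpos : (0 : ℝ) < 1 / (n + 1 : ℝ) := by positivity
        linarith
    have hFu : ∀ n : ℕ, F (u n) = 0 := by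
      intro n
      have hpos : (0 : ℝ) ≤ 1 / (n + 1 : ℝ) := by positivity
      have hr : 2 * M + 1 ≤ 2 * M + 2 + 1 / (n + 1 : ℝ) := by linarith
      have hk := key _ hr
      have h2 : A ((NormedSpace.exp (((2 * M + 2 + 1 / (n + 1 : ℝ) : ℝ) : ℂ) • T)) (A ψ))
          = 0 := by
        have h3 := congrArg (fun B : H →L[ℂ] H => B ψ) hk
        simpa [ContinuousLinearMap.mul_apply] using h3
      simp only [hF, hu, hL, ContinuousLinearMap.comp_apply,
        ContinuousLinearMap.apply_apply, h2, map_zero]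
    have hfreq : ∃ᶠ z in nhdsWithin z₀ {z₀}ᶜ, F z = 0 :=
      htend.frequently (Filter.Frequently.of_forall hFu)
    have hEq := hanal.eqOn_zero_of_preconnected_of_frequently_eq_zero
      isPreconnected_univ (Set.mem_univ z₀) hfreq
    have h0 := hEq (Set.mem_univ (0 : ℂ))
    simp only [hF, hL, zero_smul, NormedSpace.exp_zero, Pi.zero_apply,
      ContinuousLinearMap.comp_apply, ContinuousLinearMap.apply_apply,
      ContinuousLinearMap.one_apply] at h0
    simpa [ContinuousLinearMap.mul_apply, innerSL_apply_apply] using h0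
  have hAA : A * A = 0 := by
    ext ψ
    have h := hin ((A * A) ψ) ψ
    rw [inner_self_eq_zero] at h
    simpa using h
  ext ψ
  have h1 : (inner ℂ (A ψ) (A ψ) : ℂ) = 0 := by
    have h2 : (inner ℂ (A ψ) (A ψ) : ℂ) = inner ℂ ψ ((A * A) ψ) := by
      have h3 := ContinuousLinearMap.adjoint_inner_left A (A ψ) ψ
      rw [ContinuousLinearMap.isSelfAdjoint_iff'.mp hAsa] at h3
      simpa [ContinuousLinearMap.mul_apply] using h3
    rw [h2, hAA]
    simp
  simpa using inner_self_eq_zero.mp h1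
end

section
/- (Generalized Schlieder theorem for strongly unsharp localization, bounded generators.) Let H be a complex Hilbert space, let H₀, K₁, K₂, K₃ be pairwise commuting bounded selfadjoint operators on H, and for a = (a₀,a₁,a₂,a₃) ∈ ℝ⁴ let U(a) = exp(i(a₀H₀ − a₁K₁ − a₂K₂ − a₃K₃)). Let E assign to each time t ∈ ℝ and each bounded set Δ ⊆ ℝ³ a bounded operator E(t,Δ) on H with 0 ≤ E(t,Δ) ≤ I (an effect), such that: (1) (covariance) U(a) E(t,Δ) U(a)* = E(t+a₀, Δ+(a₁,a₂,a₃)) for all a ∈ ℝ⁴; (2') (weak localizability) if Δ₁ ∩ Δ₂ = ∅ then every φ ∈ H with E(t,Δ₁)φ = φ satisfies E(t,Δ₂)φ = 0; (3) (local commutativity) if inf{‖x−y‖ : x ∈ Δ₁, y ∈ Δ₂} > |t₁ − t₂| then E(t₁,Δ₁) E(t₂,Δ₂) = E(t₂,Δ₂) E(t₁,Δ₁). Then for every t ∈ ℝ and every bounded Δ ⊆ ℝ³ the effect E(t,Δ) has no eigenvalue 1: E(t,Δ)φ = φ implies φ = 0. -/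
open Bornology

/-- **Generalized Schlieder theorem for strongly unsharp localization (bounded
generators).**  A translation-covariant, weakly localizable, locally commutative
effect-valued localization `(t, Δ) ↦ E(t,Δ)` over a unitary translation representation
generated by pairwise commuting bounded selfadjoint operators is strongly unsharp:
no `E(t,Δ)` with bounded `Δ` has eigenvalue `1`. -/
theorem schlieder_theorem_strongly_unsharp
    {H : Type*} [NormedAddCommGroup H] [InnerProductSpace ℂ H] [CompleteSpace H]
    (H₀ : H →L[ℂ] H) (K : Fin 3 → (H →L[ℂ] H))
    (hH₀sa : IsSelfAdjoint H₀) (hKsa : ∀ j, IsSelfAdjoint (K j))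
    (hH₀K : ∀ j, Commute H₀ (K j)) (hKK : ∀ i j, Commute (K i) (K j))
    (U : ℝ → EuclideanSpace ℝ (Fin 3) → (H →L[ℂ] H))
    (hU : ∀ (a₀ : ℝ) (v : EuclideanSpace ℝ (Fin 3)),
      U a₀ v = NormedSpace.exp
        (Complex.I • ((a₀ : ℂ) • H₀ - ∑ j, (v j : ℂ) • K j)))
    (E : ℝ → Set (EuclideanSpace ℝ (Fin 3)) → (H →L[ℂ] H))
    -- each E(t,Δ) is an effect
    (heff : ∀ (t : ℝ) (Δ : Set (EuclideanSpace ℝ (Fin 3))), IsBounded Δ →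
      0 ≤ E t Δ ∧ E t Δ ≤ 1)
    -- (1) translation covariance
    (hcov : ∀ (t : ℝ) (Δ : Set (EuclideanSpace ℝ (Fin 3))), IsBounded Δ →
      ∀ (a₀ : ℝ) (v : EuclideanSpace ℝ (Fin 3)),
        U a₀ v * E t Δ * ContinuousLinearMap.adjoint (U a₀ v)
          = E (t + a₀) ((fun x => x + v) '' Δ))
    -- (2') weak localizability
    (hloc : ∀ (t : ℝ) (Δ₁ Δ₂ : Set (EuclideanSpace ℝ (Fin 3))),
      IsBounded Δ₁ → IsBounded Δ₂ → Δ₁ ∩ Δ₂ = ∅ →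
      ∀ φ : H, E t Δ₁ φ = φ → E t Δ₂ φ = 0)
    -- (3) local commutativity for spacelike separated sets
    (hlc : ∀ (t₁ t₂ : ℝ) (Δ₁ Δ₂ : Set (EuclideanSpace ℝ (Fin 3))),
      IsBounded Δ₁ → IsBounded Δ₂ →
      (∃ d : ℝ, |t₁ - t₂| < d ∧ ∀ x ∈ Δ₁, ∀ y ∈ Δ₂, d ≤ dist x y) →
      E t₁ Δ₁ * E t₂ Δ₂ = E t₂ Δ₂ * E t₁ Δ₁) :
    ∀ (t : ℝ) (Δ : Set (EuclideanSpace ℝ (Fin 3))), IsBounded Δ →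
      ∀ φ : H, E t Δ φ = φ → φ = 0 := by
  intro t Δ hΔ φ hφ
  obtain ⟨R, hR⟩ := isBounded_iff_forall_norm_le.mp hΔ
  -- the spatial generator in direction `e₁`
  set A : H →L[ℂ] H := Complex.I • K 0 with hA
  -- `E t Δ` is selfadjoint
  have hEpos : (E t Δ).IsPositive :=
    (ContinuousLinearMap.nonneg_iff_isPositive _).mp (heff t Δ hΔ).1
  have hEsa : ContinuousLinearMap.adjoint (E t Δ) = E t Δ := hEpos.isSelfAdjoint
  -- key vanishing: for s > 2R the matrix element of the translation vanishes
  have key : ∀ s : ℝ, 2 * R < s →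
      (inner ℂ φ (NormedSpace.exp ((s : ℂ) • A) φ) : ℂ) = 0 := by
    intro s hs
    set v : EuclideanSpace ℝ (Fin 3) := EuclideanSpace.single 0 s with hv
    have hnv : ‖v‖ = |s| := by
      rw [hv, EuclideanSpace.norm_single]; exact Real.norm_eq_abs s
    have hsum : (∑ j, ((v j : ℝ) : ℂ) • K j) = (s : ℂ) • K 0 := by
      rw [hv]
      simp [Fin.sum_univ_three, EuclideanSpace.single_apply]
    -- generator identity
    have hUeq : U 0 v = NormedSpace.exp (-((s : ℂ) • A)) := by
      rw [hU 0 v, hsum, hA]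
      norm_num
      congr 1
      module
    have hAstar : star A = -A := by
      rw [hA, star_smul, Complex.star_def, Complex.conj_I, (hKsa 0).star_eq, neg_smul]
    have hUadj : ContinuousLinearMap.adjoint (U 0 v)
        = NormedSpace.exp ((s : ℂ) • A) := by
      rw [← ContinuousLinearMap.star_eq_adjoint, hUeq, NormedSpace.star_exp,
        star_neg, star_smul, hAstar, Complex.star_def, Complex.conj_ofReal]
      simp
    -- disjointness of Δ and Δ + v
    have hdisj : Δ ∩ ((fun x => x + v) '' Δ) = ∅ := by
      ext x
      simp only [Set.mem_inter_iff, Set.mem_image, Set.mem_empty_iff_false, iff_false, not_and]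
      rintro hx ⟨y, hy, rfl⟩
      have h1 : ‖v‖ = ‖(y + v) - y‖ := by rw [add_sub_cancel_left]
      have h2 : ‖(y + v) - y‖ ≤ ‖y + v‖ + ‖y‖ := norm_sub_le _ _
      have h3 := hR _ hx
      have h4 := hR _ hy
      have := le_abs_self s
      rw [hnv] at h1
      linarith [h1 ▸ h2]
    have himg : IsBounded ((fun x => x + v) '' Δ) := by
      rw [isBounded_iff_forall_norm_le]
      refine ⟨R + ‖v‖, ?_⟩
      rintro x ⟨y, hy, rfl⟩
      exact (norm_add_le _ _).trans (add_le_add (hR y hy) le_rfl)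
    -- weak localizability
    have h0 : E t ((fun x => x + v) '' Δ) φ = 0 := hloc t Δ _ hΔ himg hdisj φ hφ
    -- covariance
    have hcov' := hcov t Δ hΔ 0 v
    rw [add_zero] at hcov'
    have h1 : (U 0 v) ((E t Δ) ((ContinuousLinearMap.adjoint (U 0 v)) φ)) = 0 := by
      rw [show (U 0 v) ((E t Δ) ((ContinuousLinearMap.adjoint (U 0 v)) φ))
            = (U 0 v * E t Δ * ContinuousLinearMap.adjoint (U 0 v)) φ from rfl,
        hcov', h0]
    rw [hUadj, hUeq] at h1
    -- cancel the unitary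
    have hinv : NormedSpace.exp ((s : ℂ) • A) * NormedSpace.exp (-((s : ℂ) • A)) = 1 := by
      letI : NormedAlgebra ℚ (H →L[ℂ] H) := NormedAlgebra.restrictScalars ℚ ℂ (H →L[ℂ] H)
      rw [← NormedSpace.exp_add_of_commute ((Commute.refl _).neg_right)]
      simp [NormedSpace.exp_zero]
    have hE0 : E t Δ (NormedSpace.exp ((s : ℂ) • A) φ) = 0 := by
      calc E t Δ (NormedSpace.exp ((s : ℂ) • A) φ)
          = (NormedSpace.exp ((s : ℂ) • A) * NormedSpace.exp (-((s : ℂ) • A)))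
              (E t Δ (NormedSpace.exp ((s : ℂ) • A) φ)) := by rw [hinv]; rfl
        _ = NormedSpace.exp ((s : ℂ) • A)
              (NormedSpace.exp (-((s : ℂ) • A))
                (E t Δ (NormedSpace.exp ((s : ℂ) • A) φ))) := rfl
        _ = NormedSpace.exp ((s : ℂ) • A) 0 := by rw [h1]
        _ = 0 := map_zero _
    calc (inner ℂ φ (NormedSpace.exp ((s : ℂ) • A) φ) : ℂ)
        = inner ℂ ((ContinuousLinearMap.adjoint (E t Δ)) φ)
            (NormedSpace.exp ((s : ℂ) • A) φ) := by rw [hEsa, hφ]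
      _ = inner ℂ φ (E t Δ (NormedSpace.exp ((s : ℂ) • A) φ)) :=
          ContinuousLinearMap.adjoint_inner_left _ _ _
      _ = 0 := by rw [hE0, inner_zero_right]
  -- analyticity and the identity theorem
  set L : (H →L[ℂ] H) →L[ℂ] ℂ := (innerSL ℂ φ).comp (ContinuousLinearMap.apply ℂ H φ) with hL
  set lin : ℂ →L[ℂ] (H →L[ℂ] H) := (1 : ℂ →L[ℂ] ℂ).smulRight A with hlin
  set g : ℝ → ℂ := fun x : ℝ => L (NormedSpace.exp (lin (x : ℂ))) with hg
  have hgan : AnalyticOnNhd ℝ g Set.univ := by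
    intro x _
    have h1 : AnalyticAt ℂ (fun z : ℂ => L (NormedSpace.exp (lin z))) ((x : ℝ) : ℂ) :=
      (L.analyticAt _).comp ((NormedSpace.exp_analytic _).comp (lin.analyticAt _))
    exact h1.restrictScalars.comp (Complex.ofRealCLM.analyticAt x)
  have hgval : ∀ x : ℝ, g x = (inner ℂ φ (NormedSpace.exp ((x : ℂ) • A) φ) : ℂ) := by
    intro x
    simp [hg, hL, hlin, ContinuousLinearMap.smulRight_apply, ContinuousLinearMap.one_apply]
  have hev : g =ᶠ[nhds (2 * R + 1)] 0 := by
    filter_upwards [Ioi_mem_nhds (by linarith : 2 * R < 2 * R + 1)] with x hx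
    rw [hgval x, key x hx]; rfl
  have hzero := hgan.eqOn_zero_of_preconnected_of_eventuallyEq_zero
    isPreconnected_univ (Set.mem_univ (2 * R + 1)) hev (Set.mem_univ (0 : ℝ))
  have hinner : (inner ℂ φ φ : ℂ) = 0 := by
    have h0 := hgval 0
    rw [hzero] at h0
    simpa [NormedSpace.exp_zero] using h0.symm
  exact inner_self_eq_zero.mp hinner
end

section
/- (Strong causality implies local commutativity for sharp localization.) Let H be a complex Hilbert space and let P assign to each time t ∈ ℝ and each bounded set Δ ⊆ ℝ³ an orthogonal projection P(t,Δ) on H such that: (localizability) if Δ₁ ∩ Δ₂ = ∅ then P(t,Δ₁) P(t,Δ₂) = 0; and (strong causality) for all t, t' ∈ ℝ and bounded Δ, P(t,Δ) ≤ P(t', Δ_{|t'−t|}), where Δ_s := {x ∈ ℝ³ : dist(x, Δ) ≤ s} is the inflated set. Then for any two spacelike separated sets, i.e., whenever inf{‖x−y‖ : x ∈ Δ₁, y ∈ Δ₂} > |t₁ − t₂|, one has P(t₁,Δ₁) P(t₂,Δ₂) = 0; in particular P(t₁,Δ₁) and P(t₂,Δ₂) commute. -/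
open Bornology

/-- If `Q ≤ R` are orthogonal projections and `R v = 0`, then `Q v = 0`. -/
lemma proj_ker_mono {H : Type*} [NormedAddCommGroup H] [InnerProductSpace ℂ H]
    [CompleteSpace H] {Q R : H →L[ℂ] H}
    (hQ : IsSelfAdjoint Q) (hQ2 : Q * Q = Q) (hle : Q ≤ R) {v : H}
    (hv : R v = 0) : Q v = 0 := by
  have hpos := (ContinuousLinearMap.le_def Q R).mp hle
  have h0 : 0 ≤ (R - Q).reApplyInnerSelf v := hpos.2 v
  have hre : (R - Q).reApplyInnerSelf v =
      RCLike.re (inner ℂ (R v) v) - RCLike.re (inner ℂ (Q v) v) := by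
    simp [ContinuousLinearMap.reApplyInnerSelf, inner_sub_left]
  have hQv : RCLike.re (inner ℂ (Q v) v) ≤ 0 := by
    rw [hv] at hre
    simp only [inner_zero_left, map_zero, zero_sub] at hre
    linarith
  have hnorm : RCLike.re (inner ℂ (Q v) v) = ‖Q v‖ ^ 2 := by
    have : inner ℂ (Q v) v = inner ℂ (Q v) (Q v) := by
      conv_lhs => rw [← hQ2]
      rw [ContinuousLinearMap.mul_apply, ← ContinuousLinearMap.adjoint_inner_left,
        hQ.adjoint_eq]
    rw [this, inner_self_eq_norm_sq]
  have : ‖Q v‖ ^ 2 ≤ 0 := hnorm ▸ hQv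
  have : ‖Q v‖ = 0 := by nlinarith [norm_nonneg (Q v)]
  simpa using this

/-- **Strong causality implies local commutativity for sharp localization.**
If a projection-valued localization `(t, Δ) ↦ P(t,Δ)` satisfies localizability
(`P(t,Δ₁) P(t,Δ₂) = 0` for disjoint `Δ₁, Δ₂`) and strong causality
(`P(t,Δ) ≤ P(t', Δ_{|t'−t|})` for the inflated set `Δ_s = {x | dist(x,Δ) ≤ s}`),
then for spacelike separated sets `P(t₁,Δ₁) P(t₂,Δ₂) = 0`; in particular the two
projections commute. -/
theorem strong_causality_implies_local_commutativity
    {H : Type*} [NormedAddCommGroup H] [InnerProductSpace ℂ H] [CompleteSpace H]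
    (P : ℝ → Set (EuclideanSpace ℝ (Fin 3)) → (H →L[ℂ] H))
    -- each P(t,Δ) is an orthogonal projection
    (hproj : ∀ (t : ℝ) (Δ : Set (EuclideanSpace ℝ (Fin 3))), IsBounded Δ →
      IsSelfAdjoint (P t Δ) ∧ P t Δ * P t Δ = P t Δ)
    -- localizability
    (hloc : ∀ (t : ℝ) (Δ₁ Δ₂ : Set (EuclideanSpace ℝ (Fin 3))),
      IsBounded Δ₁ → IsBounded Δ₂ → Δ₁ ∩ Δ₂ = ∅ → P t Δ₁ * P t Δ₂ = 0)
    -- strong causality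
    (hsc : ∀ (t t' : ℝ) (Δ : Set (EuclideanSpace ℝ (Fin 3))), IsBounded Δ →
      P t Δ ≤ P t' {x | Metric.infDist x Δ ≤ |t' - t|}) :
    ∀ (t₁ t₂ : ℝ) (Δ₁ Δ₂ : Set (EuclideanSpace ℝ (Fin 3))),
      IsBounded Δ₁ → IsBounded Δ₂ →
      (∃ d : ℝ, |t₁ - t₂| < d ∧ ∀ x ∈ Δ₁, ∀ y ∈ Δ₂, d ≤ dist x y) →
      P t₁ Δ₁ * P t₂ Δ₂ = 0 ∧ P t₁ Δ₁ * P t₂ Δ₂ = P t₂ Δ₂ * P t₁ Δ₁ := by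
  intro t₁ t₂ Δ₁ Δ₂ hb₁ hb₂ ⟨d, hd, hsep⟩
  -- main claim: the product is zero
  have hmain : P t₁ Δ₁ * P t₂ Δ₂ = 0 := by
    rcases Δ₁.eq_empty_or_nonempty with rfl | ⟨x₀, hx₀⟩
    · -- P t₁ ∅ = 0 by localizability
      have h0 : P t₁ (∅ : Set (EuclideanSpace ℝ (Fin 3))) = 0 := by
        have := hloc t₁ ∅ ∅ hb₁ hb₁ (by simp)
        rw [(hproj t₁ ∅ hb₁).2] at this
        exact this
      rw [h0, zero_mul]
    · set S : Set (EuclideanSpace ℝ (Fin 3)) :=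
        {x | Metric.infDist x Δ₁ ≤ |t₂ - t₁|} with hS
      have hbS : IsBounded S := by
        refine (Metric.isBounded_closedBall
          (x := x₀) (r := |t₂ - t₁| + Metric.diam Δ₁)).subset ?_
        intro x hx
        rw [Metric.mem_closedBall]
        calc dist x x₀ ≤ Metric.infDist x Δ₁ + Metric.diam Δ₁ :=
              Metric.dist_le_infDist_add_diam hb₁ hx₀
          _ ≤ |t₂ - t₁| + Metric.diam Δ₁ := by
              have hx' : Metric.infDist x Δ₁ ≤ |t₂ - t₁| := hx
              linarith
      have hdisj : S ∩ Δ₂ = ∅ := by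
        ext y
        simp only [Set.mem_inter_iff, Set.mem_empty_iff_false, iff_false, not_and]
        intro hyS hy₂
        have hlt : Metric.infDist y Δ₁ < d := by
          calc Metric.infDist y Δ₁ ≤ |t₂ - t₁| := hyS
            _ = |t₁ - t₂| := abs_sub_comm _ _
            _ < d := hd
        obtain ⟨x, hx, hxy⟩ := (Metric.infDist_lt_iff ⟨x₀, hx₀⟩).mp hlt
        have := hsep x hx y hy₂
        rw [dist_comm] at hxy
        linarith
      -- P t₂ S * P t₂ Δ₂ = 0
      have hRS : P t₂ S * P t₂ Δ₂ = 0 := hloc t₂ S Δ₂ hbS hb₂ hdisj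
      have hle : P t₁ Δ₁ ≤ P t₂ S := hsc t₁ t₂ Δ₁ hb₁
      ext v
      have hRv : P t₂ S (P t₂ Δ₂ v) = 0 := by
        have := congrArg (fun T => T v) hRS
        simpa using this
      have := proj_ker_mono (hproj t₁ Δ₁ hb₁).1 (hproj t₁ Δ₁ hb₁).2 hle hRv
      simpa using this
  refine ⟨hmain, ?_⟩
  have hadj : P t₂ Δ₂ * P t₁ Δ₁ = 0 := by
    have := congrArg star hmain
    rwa [star_mul, (hproj t₁ Δ₁ hb₁).1.star_eq, (hproj t₂ Δ₂ hb₂).1.star_eq,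
      star_zero] at this
  rw [hmain, hadj]
end

section
/- (Strong causality for unsharp localization: orthogonality of sharply localized states at spacelike separation.) Let H be a complex Hilbert space and let E assign to each time t ∈ ℝ and each bounded set Δ ⊆ ℝ³ an effect E(t,Δ) (a bounded selfadjoint operator with 0 ≤ E(t,Δ) ≤ I) such that: (weak localizability) if Δ₁ ∩ Δ₂ = ∅ then every φ ∈ H with E(t,Δ₁)φ = φ satisfies E(t,Δ₂)φ = 0; and (strong causality) for all t, t' ∈ ℝ and bounded Δ, every φ with E(t,Δ)φ = φ satisfies E(t', Δ_{|t'−t|})φ = φ, where Δ_s := {x ∈ ℝ³ : dist(x,Δ) ≤ s}. Then for any two spacelike separated sets, i.e., whenever inf{‖x−y‖ : x ∈ Δ₁, y ∈ Δ₂} > |t₁ − t₂|, any vectors φ, ψ ∈ H with E(t₁,Δ₁)φ = φ and E(t₂,Δ₂)ψ = ψ are orthogonal: ⟪φ, ψ⟫ = 0. (Equivalently, P⁽¹⁾_{Δ₁} P⁽¹⁾_{Δ₂} = 0 for the spectral projections at eigenvalue 1.) -/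
open scoped InnerProductSpace
open Bornology

/-- **Strong causality for unsharp localization: orthogonality of sharply localized
states at spacelike separation.**  If an effect-valued localization `(t, Δ) ↦ E(t,Δ)`
satisfies weak localizability and strong causality (any state sharply localized in `Δ`
at time `t` is sharply localized in the inflated set `Δ_{|t'−t|}` at time `t'`), then
states sharply localized in spacelike separated sets are orthogonal, i.e.
`P⁽¹⁾_{Δ₁} P⁽¹⁾_{Δ₂} = 0` for the spectral projections at eigenvalue `1`. -/
theorem strong_causality_orthogonality_unsharp
    {H : Type*} [NormedAddCommGroup H] [InnerProductSpace ℂ H] [CompleteSpace H]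
    (E : ℝ → Set (EuclideanSpace ℝ (Fin 3)) → (H →L[ℂ] H))
    -- each E(t,Δ) is an effect
    (heff : ∀ (t : ℝ) (Δ : Set (EuclideanSpace ℝ (Fin 3))), IsBounded Δ →
      0 ≤ E t Δ ∧ E t Δ ≤ 1)
    -- weak localizability
    (hloc : ∀ (t : ℝ) (Δ₁ Δ₂ : Set (EuclideanSpace ℝ (Fin 3))),
      IsBounded Δ₁ → IsBounded Δ₂ → Δ₁ ∩ Δ₂ = ∅ →
      ∀ φ : H, E t Δ₁ φ = φ → E t Δ₂ φ = 0)
    -- strong causality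
    (hsc : ∀ (t t' : ℝ) (Δ : Set (EuclideanSpace ℝ (Fin 3))), IsBounded Δ →
      ∀ φ : H, E t Δ φ = φ → E t' {x | Metric.infDist x Δ ≤ |t' - t|} φ = φ) :
    ∀ (t₁ t₂ : ℝ) (Δ₁ Δ₂ : Set (EuclideanSpace ℝ (Fin 3))),
      IsBounded Δ₁ → IsBounded Δ₂ →
      (∃ d : ℝ, |t₁ - t₂| < d ∧ ∀ x ∈ Δ₁, ∀ y ∈ Δ₂, d ≤ dist x y) →
      ∀ φ ψ : H, E t₁ Δ₁ φ = φ → E t₂ Δ₂ ψ = ψ → ⟪φ, ψ⟫_ℂ = 0 := by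
  intro t₁ t₂ Δ₁ Δ₂ hb₁ hb₂ ⟨d, hd, hsep⟩ φ ψ hφ hψ
  rcases Δ₁.eq_empty_or_nonempty with h | hne
  · -- Δ₁ empty: φ = 0
    have : E t₁ Δ₁ φ = 0 := hloc t₁ Δ₁ Δ₁ hb₁ hb₁ (by simp [h]) φ hφ
    rw [hφ] at this
    simp [this]
  · set Δ' : Set (EuclideanSpace ℝ (Fin 3)) :=
      {x | Metric.infDist x Δ₁ ≤ |t₂ - t₁|} with hΔ'
    obtain ⟨z, hz⟩ := hne
    have hb' : IsBounded Δ' := by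
      apply (Metric.isBounded_closedBall
        (x := z) (r := |t₂ - t₁| + Metric.diam Δ₁)).subset
      intro x hx
      rw [Metric.mem_closedBall]
      calc dist x z ≤ Metric.infDist x Δ₁ + Metric.diam Δ₁ :=
            Metric.dist_le_infDist_add_diam hb₁ hz
        _ ≤ |t₂ - t₁| + Metric.diam Δ₁ := by
            have hx' : Metric.infDist x Δ₁ ≤ |t₂ - t₁| := hx
            linarith
    have hφ' : E t₂ Δ' φ = φ := hsc t₁ t₂ Δ₁ hb₁ φ hφ
    have hdisj : Δ' ∩ Δ₂ = ∅ := by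
      ext x
      simp only [Set.mem_inter_iff, Set.mem_empty_iff_false, iff_false, not_and]
      intro hx hx2
      have : d ≤ Metric.infDist x Δ₁ := by
        by_contra hlt
        push_neg at hlt
        obtain ⟨y, hy, hdy⟩ := (Metric.infDist_lt_iff ⟨z, hz⟩).mp hlt
        have := hsep y hy x hx2
        rw [dist_comm] at hdy
        linarith
      have habs : |t₂ - t₁| = |t₁ - t₂| := abs_sub_comm _ _
      rw [hΔ'] at hx
      simp only [Set.mem_setOf_eq, habs] at hx
      linarith
    have hφ0 : E t₂ Δ₂ φ = 0 := hloc t₂ Δ' Δ₂ hb' hb₂ hdisj φ hφ'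
    have hsa : IsSelfAdjoint (E t₂ Δ₂) :=
      (((ContinuousLinearMap.nonneg_iff_isPositive _).mp (heff t₂ Δ₂ hb₂).1)).isSelfAdjoint
    calc ⟪φ, ψ⟫_ℂ = ⟪φ, E t₂ Δ₂ ψ⟫_ℂ := by rw [hψ]
      _ = ⟪E t₂ Δ₂ φ, ψ⟫_ℂ :=
          ((ContinuousLinearMap.isSelfAdjoint_iff_isSymmetric.mp hsa) φ ψ).symm
      _ = 0 := by rw [hφ0]; simp
end
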